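/- For every p ≥ 1 there exists a constant C = C(p) > 0 such that the following holds. Let Ω ⊆ ℝ^d be a Borel set and let μ, λ be finite positive Borel measures on Ω with finite p-th moments and λ(Ω) > 0. Then for every countable Borel partition (Ω_k)_k of Ω with λ(Ω_k) > 0 for every k, and every ε ∈ (0,1): W_{Ω,p}^p( μ, (μ(Ω)/λ(Ω))·λ ) ≤ (1+ε) · Σ_k W_{Ω_k,p}^p( μ, (μ(Ω_k)/λ(Ω_k))·λ ) + (C/ε^{p−1}) · W_{Ω,p}^p( Σ_k (μ(Ω_k)/λ(Ω_k))·χ_{Ω_k}·λ, (μ(Ω)/λ(Ω))·λ ). -/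

import Mathlib

open MeasureTheory ProbabilityTheory Filter
open scoped ENNReal NNReal

noncomputable section

/-- The Wasserstein cost of order `p` (i.e. the `p`-th power of the `p`-Wasserstein
distance): the infimum over couplings `π` of `μ` and `ν` of `∫ edist(x,y)^p dπ`. -/
def wCost {E : Type*} [MeasurableSpace E] [PseudoEMetricSpace E]
    (p : ℝ) (μ ν : Measure E) : ℝ≥0∞ :=
  ⨅ π ∈ {π : Measure (E × E) | π.map Prod.fst = μ ∧ π.map Prod.snd = ν},
    ∫⁻ z, edist z.1 z.2 ^ p ∂π

/-- The boundary Wasserstein cost of order `p` on a set `A`: the infimum of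
`∫ edist(x,y)^p dπ` over positive measures `π` concentrated on `cl A × cl A`
whose marginals restricted to `A` coincide with `μ` and `ν` restricted to `A`. -/
def bCost {E : Type*} [MeasurableSpace E] [PseudoEMetricSpace E]
    (p : ℝ) (A : Set E) (μ ν : Measure E) : ℝ≥0∞ :=
  ⨅ π ∈ {π : Measure (E × E) |
      π ((closure A ×ˢ closure A)ᶜ) = 0 ∧
      (π.map Prod.fst).restrict A = μ.restrict A ∧
      (π.map Prod.snd).restrict A = ν.restrict A},
    ∫⁻ z, edist z.1 z.2 ^ p ∂π

/-- The empirical measure `(1/n) ∑_{i<n} δ_{x i}`. -/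
def empMeasure {E : Type*} [MeasurableSpace E] (n : ℕ) (x : ℕ → E) : Measure E :=
  (n : ℝ≥0∞)⁻¹ • ∑ i ∈ Finset.range n, Measure.dirac (x i)

/-- A set `Ω ⊆ ℝ^d` has Lipschitz boundary: near every boundary point, for a suitable
unit direction `e`, `Ω` coincides with the open region strictly above the graph of a
Lipschitz function defined on the hyperplane `e^⊥`. -/
def HasLipschitzBoundary {d : ℕ} (Ω : Set (EuclideanSpace ℝ (Fin d))) : Prop :=
  ∀ x ∈ frontier Ω, ∃ e : EuclideanSpace ℝ (Fin d), ‖e‖ = 1 ∧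
    ∃ r : ℝ, 0 < r ∧ ∃ L : ℝ≥0, ∃ φ : EuclideanSpace ℝ (Fin d) → ℝ,
      LipschitzWith L φ ∧
      Ω ∩ Metric.ball x r =
        {y ∈ Metric.ball x r | φ (y - (inner ℝ y e : ℝ) • e) < (inner ℝ y e : ℝ)}

/-- `X` is an i.i.d. sequence of random variables with common law `μ` under `P`. -/
def IsIIDSeq {Ωs E : Type*} [MeasurableSpace Ωs] [MeasurableSpace E]
    (P : Measure Ωs) (X : ℕ → Ωs → E) (μ : Measure E) : Prop :=
  (∀ i, Measurable (X i)) ∧ (∀ i, P.map (X i) = μ) ∧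
    iIndepFun X P

/-- `X` and `Y` are jointly i.i.d. sequences with common law `μ` under `P`. -/
def IsIIDPair {Ωs E : Type*} [MeasurableSpace Ωs] [MeasurableSpace E]
    (P : Measure Ωs) (X Y : ℕ → Ωs → E) (μ : Measure E) : Prop :=
  (∀ i, Measurable (X i)) ∧ (∀ i, Measurable (Y i)) ∧
  (∀ i, P.map (X i) = μ) ∧ (∀ i, P.map (Y i) = μ) ∧
    iIndepFun (Sum.elim X Y) P

/-- `ρ` is a Hölder continuous probability density on `Ω`, uniformly strictly positive
and bounded from above. -/
def IsGoodDensity {d : ℕ} (Ω : Set (EuclideanSpace ℝ (Fin d)))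
    (ρ : EuclideanSpace ℝ (Fin d) → ℝ) : Prop :=
  Measurable ρ ∧
  (∃ α ∈ Set.Ioc (0:ℝ) 1, ∃ C : ℝ, ∀ x ∈ Ω, ∀ y ∈ Ω, |ρ x - ρ y| ≤ C * dist x y ^ α) ∧
  (∃ a > (0:ℝ), ∀ x ∈ Ω, a ≤ ρ x) ∧ (∃ b : ℝ, ∀ x ∈ Ω, ρ x ≤ b) ∧
  ∫ x in Ω, ρ x = 1

end


section AuxiliaryLemmas

open MeasureTheory ProbabilityTheory
open scoped ENNReal NNReal

private lemma real_aux1 (p ε : ℝ) (hp : 1 ≤ p) (h0 : 0 < ε) (h1 : ε < 1) :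
    ((1 : ℝ) - ε / (ε + 3 * p)) ^ (1 - p) ≤ 1 + ε := by
  have hp0 : (0:ℝ) < p := lt_of_lt_of_le one_pos hp
  have hd : (0:ℝ) < ε + 3 * p := by linarith
  have h1t : (1 : ℝ) - ε / (ε + 3 * p) = 3 * p / (ε + 3 * p) := by field_simp; ring
  rw [h1t]
  have hbase : (0:ℝ) < 3 * p / (ε + 3 * p) := by positivity
  rw [show (1 - p) = -(p-1) by ring, Real.rpow_neg hbase.le, ← Real.inv_rpow hbase.le]
  have hinv : (3 * p / (ε + 3 * p))⁻¹ = 1 + ε / (3 * p) := by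
    rw [inv_div]; field_simp; ring
  rw [hinv]
  have e1 : (1 + ε / (3 * p)) ^ (p - 1) ≤ Real.exp (ε / (3*p)) ^ (p - 1) :=
    Real.rpow_le_rpow (by positivity) (by linarith [Real.add_one_le_exp (ε / (3*p))])
      (by linarith)
  have e2 : Real.exp (ε / (3*p)) ^ (p - 1) = Real.exp (ε / (3*p) * (p - 1)) := by
    rw [← Real.exp_mul]
  have e3 : ε / (3*p) * (p-1) ≤ ε/3 := by
    rw [div_mul_eq_mul_div, div_le_div_iff₀ (by positivity) (by norm_num)]
    nlinarith
  have hpos : (0:ℝ) < 1 - ε/3 := by linarith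
  have e4 : Real.exp (ε/3) ≤ (1 - ε/3)⁻¹ := by
    have hb : (1 - ε/3) ≤ Real.exp (-(ε/3)) := by linarith [Real.add_one_le_exp (-(ε/3))]
    rw [show Real.exp (ε/3) = (Real.exp (-(ε/3)))⁻¹ by rw [Real.exp_neg, inv_inv]]
    exact inv_anti₀ hpos hb
  have e5 : (1 - ε/3)⁻¹ ≤ 1 + ε := by
    rw [inv_eq_one_div, div_le_iff₀ hpos]; nlinarith
  calc (1 + ε / (3 * p)) ^ (p - 1) ≤ Real.exp (ε / (3*p)) ^ (p-1) := e1
    _ = Real.exp (ε / (3*p) * (p-1)) := e2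
    _ ≤ Real.exp (ε/3) := Real.exp_le_exp.2 e3
    _ ≤ 1 + ε := e4.trans e5

private lemma real_aux2 (p ε : ℝ) (hp : 1 ≤ p) (h0 : 0 < ε) (h1 : ε < 1) :
    (ε / (ε + 3 * p)) ^ (1 - p) ≤ (4*p) ^ (p-1) / ε ^ (p-1) := by
  have hp0 : (0:ℝ) < p := lt_of_lt_of_le one_pos hp
  have hd : (0:ℝ) < ε + 3 * p := by linarith
  have ht : (0:ℝ) < ε / (ε + 3 * p) := by positivity
  rw [show (1 - p) = -(p-1) by ring, Real.rpow_neg ht.le, ← Real.inv_rpow ht.le, inv_div]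
  rw [← Real.div_rpow (by positivity) h0.le]
  apply Real.rpow_le_rpow (by positivity) _ (by linarith)
  exact (div_le_div_iff_of_pos_right h0).2 (by linarith)

private lemma elem_ineq (p ε : ℝ) (hp : 1 ≤ p) (h0 : 0 < ε) (h1 : ε < 1) (a b : ℝ≥0∞) :
    (a + b) ^ p ≤ ENNReal.ofReal (1 + ε) * a ^ p
      + ENNReal.ofReal ((4*p) ^ (p-1) / ε ^ (p-1)) * b ^ p := by
  have hp0 : (0:ℝ) < p := lt_of_lt_of_le one_pos hp
  set t : ℝ := ε / (ε + 3 * p) with ht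
  have hd : (0:ℝ) < ε + 3 * p := by linarith
  have ht0 : 0 < t := by positivity
  have ht1 : t < 1 := by
    rw [ht, div_lt_one hd]; linarith
  set w₁ : ℝ≥0∞ := ENNReal.ofReal (1 - t) with hw₁
  set w₂ : ℝ≥0∞ := ENNReal.ofReal t with hw₂
  have hw₁0 : w₁ ≠ 0 := by simp [hw₁, ENNReal.ofReal_eq_zero]; linarith
  have hw₂0 : w₂ ≠ 0 := by simp [hw₂, ENNReal.ofReal_eq_zero]; linarith
  have hw₁t : w₁ ≠ ∞ := ENNReal.ofReal_ne_top
  have hw₂t : w₂ ≠ ∞ := ENNReal.ofReal_ne_top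
  have hw : w₁ + w₂ = 1 := by
    rw [hw₁, hw₂, ← ENNReal.ofReal_add (by linarith) ht0.le]
    norm_num
  have key := ENNReal.rpow_arith_mean_le_arith_mean2_rpow w₁ w₂ (a / w₁) (b / w₂) hw hp
  rw [ENNReal.mul_div_cancel hw₁0 hw₁t, ENNReal.mul_div_cancel hw₂0 hw₂t] at key
  have hrw : ∀ (w : ℝ≥0∞) (x : ℝ≥0∞), w ≠ 0 → w ≠ ∞ →
      w * (x / w) ^ p = w ^ (1 - p) * x ^ p := by
    intro w x hw0 hwt
    rw [ENNReal.div_rpow_of_nonneg _ _ hp0.le, div_eq_mul_inv, ← ENNReal.rpow_neg,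
      show (1-p) = 1 + (-p) by ring, ENNReal.rpow_add _ _ hw0 hwt, ENNReal.rpow_one]
    ring
  rw [hrw _ a hw₁0 hw₁t, hrw _ b hw₂0 hw₂t] at key
  refine key.trans (add_le_add ?_ ?_)
  · refine mul_le_mul_left ?_ _
    rw [hw₁, ENNReal.ofReal_rpow_of_pos (by linarith)]
    exact ENNReal.ofReal_le_ofReal (real_aux1 p ε hp h0 h1)
  · refine mul_le_mul_left ?_ _
    rw [hw₂, ENNReal.ofReal_rpow_of_pos ht0]
    exact ENNReal.ofReal_le_ofReal (real_aux2 p ε hp h0 h1)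

private lemma biInf_lt_aux {X : Type*} {S : Set X} {f : X → ℝ≥0∞} {c : ℝ≥0∞}
    (h : (⨅ x ∈ S, f x) < c) : ∃ x ∈ S, f x < c := by
  by_contra hcon
  push_neg at hcon
  exact absurd (le_iInf₂ hcon) h.not_ge

private lemma wCost_lt_iff {E : Type*} [MeasurableSpace E] [PseudoEMetricSpace E]
    {p : ℝ} {μ ν : Measure E} {c : ℝ≥0∞} (h : wCost p μ ν < c) :
    ∃ π : Measure (E × E), (π.map Prod.fst = μ ∧ π.map Prod.snd = ν) ∧
      ∫⁻ z, edist z.1 z.2 ^ p ∂π < c := by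
  unfold wCost at h
  obtain ⟨π, hmem, hlt⟩ := biInf_lt_aux h
  exact ⟨π, hmem, hlt⟩

private lemma wCost_le_coupling {E : Type*} [MeasurableSpace E] [PseudoEMetricSpace E]
    {p : ℝ} {μ ν : Measure E} {π : Measure (E × E)}
    (h1 : π.map Prod.fst = μ) (h2 : π.map Prod.snd = ν) :
    wCost p μ ν ≤ ∫⁻ z, edist z.1 z.2 ^ p ∂π := by
  unfold wCost
  exact iInf₂_le π ⟨h1, h2⟩

private lemma glue_couplings {d : ℕ} (p : ℝ) (hp : 1 ≤ p)
    (π1 π2 : Measure (EuclideanSpace ℝ (Fin d) × EuclideanSpace ℝ (Fin d)))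
    [IsFiniteMeasure π1] [IsFiniteMeasure π2]
    (hmid : π1.map Prod.snd = π2.map Prod.fst) :
    ∃ π : Measure (EuclideanSpace ℝ (Fin d) × EuclideanSpace ℝ (Fin d)),
      π.map Prod.fst = π1.map Prod.fst ∧ π.map Prod.snd = π2.map Prod.snd ∧
      (∫⁻ z, edist z.1 z.2 ^ p ∂π) ^ (1/p) ≤
        (∫⁻ z, edist z.1 z.2 ^ p ∂π1) ^ (1/p) + (∫⁻ z, edist z.1 z.2 ^ p ∂π2) ^ (1/p) := by
  have hp0 : (0:ℝ) < p := lt_of_lt_of_le one_pos hp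
  set E := EuclideanSpace ℝ (Fin d) with hE
  have hswap : (Prod.fst ∘ Prod.swap : E × E → E) = Prod.snd := rfl
  have hswap2 : (Prod.snd ∘ Prod.swap : E × E → E) = Prod.fst := rfl
  set σ : Measure (E × E) := π1.map Prod.swap with hσ
  haveI : IsFiniteMeasure σ := by
    constructor
    rw [hσ, Measure.map_apply measurable_swap MeasurableSet.univ]
    exact measure_lt_top π1 _
  have hσfst : σ.fst = π2.fst := by
    show σ.map Prod.fst = π2.map Prod.fst
    rw [hσ, Measure.map_map measurable_fst measurable_swap, hswap]
    exact hmid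
  have hσsnd : σ.map Prod.snd = π1.map Prod.fst := by
    rw [hσ, Measure.map_map measurable_snd measurable_swap, hswap2]
  have hσdis : π2.fst ⊗ₘ σ.condKernel = σ := by
    rw [← hσfst]; exact σ.disintegrate _
  have hπ2dis : π2.fst ⊗ₘ π2.condKernel = π2 := π2.disintegrate _
  set m : Measure (E × (E × E)) := π2.fst ⊗ₘ (σ.condKernel ×ₖ π2.condKernel) with hm
  have hmap_fst : (m.map Prod.snd).map Prod.fst = π1.map Prod.fst := by
    rw [Measure.map_map measurable_fst measurable_snd, ← hσsnd]
    ext s hs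
    rw [Measure.map_apply (measurable_fst.comp measurable_snd) hs,
      Measure.map_apply measurable_snd hs, ← hσdis,
      Measure.compProd_apply (hs.preimage measurable_snd),
      hm, Measure.compProd_apply
        (hs.preimage (measurable_fst.comp measurable_snd))]
    congr 1
    ext z
    have : (Prod.mk z ⁻¹' ((Prod.fst ∘ Prod.snd : E × E × E → E) ⁻¹' s)) = s ×ˢ Set.univ := by
      ext xy; simp [Set.mem_prod]
    rw [this, Kernel.prod_apply, Measure.prod_prod, measure_univ, mul_one]
    congr 1
  have hmap_snd : (m.map Prod.snd).map Prod.snd = π2.map Prod.snd := by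
    rw [Measure.map_map measurable_snd measurable_snd]
    ext s hs
    rw [Measure.map_apply (measurable_snd.comp measurable_snd) hs,
      Measure.map_apply measurable_snd hs, ← hπ2dis,
      Measure.compProd_apply (hs.preimage measurable_snd),
      hm, Measure.compProd_apply
        (hs.preimage (measurable_snd.comp measurable_snd))]
    congr 1
    ext z
    have : (Prod.mk z ⁻¹' ((Prod.snd ∘ Prod.snd : E × E × E → E) ⁻¹' s)) = Set.univ ×ˢ s := by
      ext xy; simp [Set.mem_prod]
    rw [this, Kernel.prod_apply, Measure.prod_prod, measure_univ, one_mul]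
    congr 1
  refine ⟨m.map Prod.snd, hmap_fst, hmap_snd, ?_⟩
  have hc : Measurable fun q : E × E => edist q.1 q.2 ^ p :=
    ENNReal.continuous_rpow_const.measurable.comp measurable_edist
  have hF0 : Measurable fun q : E × E × E => edist q.2.1 q.1 :=
    (measurable_fst.comp measurable_snd).edist measurable_fst
  have hG0 : Measurable fun q : E × E × E => edist q.1 q.2.2 :=
    measurable_fst.edist (measurable_snd.comp measurable_snd)
  have hF : Measurable fun q : E × E × E => edist q.2.1 q.1 ^ p :=
    ENNReal.continuous_rpow_const.measurable.comp hF0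
  have hG : Measurable fun q : E × E × E => edist q.1 q.2.2 ^ p :=
    ENNReal.continuous_rpow_const.measurable.comp hG0
  have hm1 : ∫⁻ q, edist q.2.1 q.1 ^ p ∂m = ∫⁻ z, edist z.1 z.2 ^ p ∂π1 := by
    rw [hm, Measure.lintegral_compProd hF]
    have inner : ∀ z : E, (∫⁻ xy, edist xy.1 z ^ p ∂(σ.condKernel ×ₖ π2.condKernel) z)
        = ∫⁻ x, edist x z ^ p ∂(σ.condKernel z) := by
      intro z
      have hmeas : Measurable (fun xy : E × E => edist xy.1 z ^ p) :=
        ENNReal.continuous_rpow_const.measurable.comp (measurable_fst.edist measurable_const)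
      rw [Kernel.prod_apply,
        lintegral_prod (fun xy : E × E => edist xy.1 z ^ p) hmeas.aemeasurable]
      simp
    refine (lintegral_congr fun z => inner z).trans ?_
    have h2 : Measurable fun q : E × E => edist q.2 q.1 ^ p :=
      ENNReal.continuous_rpow_const.measurable.comp (measurable_snd.edist measurable_fst)
    calc ∫⁻ z, ∫⁻ x, edist x z ^ p ∂(σ.condKernel z) ∂π2.fst
        = ∫⁻ q : E × E, edist q.2 q.1 ^ p ∂(π2.fst ⊗ₘ σ.condKernel) :=
          (Measure.lintegral_compProd h2).symm
      _ = ∫⁻ q : E × E, edist q.2 q.1 ^ p ∂σ := by rw [hσdis]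
      _ = ∫⁻ z, edist z.1 z.2 ^ p ∂π1 := by
          rw [hσ, lintegral_map h2 measurable_swap]; rfl
  have hm2 : ∫⁻ q, edist q.1 q.2.2 ^ p ∂m = ∫⁻ z, edist z.1 z.2 ^ p ∂π2 := by
    rw [hm, Measure.lintegral_compProd hG]
    have inner : ∀ z : E, (∫⁻ xy, edist z xy.2 ^ p ∂(σ.condKernel ×ₖ π2.condKernel) z)
        = ∫⁻ y, edist z y ^ p ∂(π2.condKernel z) := by
      intro z
      have hmeas : Measurable (fun xy : E × E => edist z xy.2 ^ p) :=
        ENNReal.continuous_rpow_const.measurable.comp (measurable_const.edist measurable_snd)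
      rw [Kernel.prod_apply,
        lintegral_prod (fun xy : E × E => edist z xy.2 ^ p) hmeas.aemeasurable]
      simp; rfl
    refine (lintegral_congr fun z => inner z).trans ?_
    rw [← Measure.lintegral_compProd hc, hπ2dis]
  have tri : ∀ q : E × E × E, edist q.2.1 q.2.2 ^ p ≤ (edist q.2.1 q.1 + edist q.1 q.2.2) ^ p :=
    fun q => ENNReal.rpow_le_rpow (edist_triangle _ _ _) hp0.le
  calc (∫⁻ z, edist z.1 z.2 ^ p ∂(m.map Prod.snd)) ^ (1/p)
      = (∫⁻ q, edist q.2.1 q.2.2 ^ p ∂m) ^ (1/p) := by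
        rw [lintegral_map hc measurable_snd]
    _ ≤ (∫⁻ q, (edist q.2.1 q.1 + edist q.1 q.2.2) ^ p ∂m) ^ (1/p) :=
        ENNReal.rpow_le_rpow (lintegral_mono tri) (by positivity)
    _ ≤ (∫⁻ q, edist q.2.1 q.1 ^ p ∂m) ^ (1/p) + (∫⁻ q, edist q.1 q.2.2 ^ p ∂m) ^ (1/p) :=
        ENNReal.lintegral_Lp_add_le hF0.aemeasurable hG0.aemeasurable hp
    _ = _ := by rw [hm1, hm2]

end AuxiliaryLemmas

/-- Equation (2.4): geometric subadditivity of the Wasserstein cost with respect to a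
countable Borel partition of `Ω`, with constant `C = C(p)`. -/
theorem wasserstein_geometric_subadditivity (p : ℝ) (hp : 1 ≤ p) :
    ∃ C > (0:ℝ), ∀ (d : ℕ) (Ω : Set (EuclideanSpace ℝ (Fin d))), MeasurableSet Ω →
      ∀ (μ lam : Measure (EuclideanSpace ℝ (Fin d))),
        IsFiniteMeasure μ → IsFiniteMeasure lam →
        μ Ωᶜ = 0 → lam Ωᶜ = 0 →
        (∫⁻ x, edist x 0 ^ p ∂μ) ≠ ⊤ → (∫⁻ x, edist x 0 ^ p ∂lam) ≠ ⊤ →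
        0 < lam Ω →
        ∀ Ωs : ℕ → Set (EuclideanSpace ℝ (Fin d)),
          (∀ k, MeasurableSet (Ωs k)) →
          Pairwise (Function.onFun Disjoint Ωs) →
          (⋃ k, Ωs k) = Ω →
          (∀ k, 0 < lam (Ωs k)) →
          ∀ ε : ℝ, 0 < ε → ε < 1 →
            wCost p (μ.restrict Ω) (((μ Ω / lam Ω) • lam).restrict Ω) ≤
              ENNReal.ofReal (1 + ε) *
                (∑' k, wCost p (μ.restrict (Ωs k))
                  (((μ (Ωs k) / lam (Ωs k)) • lam).restrict (Ωs k))) +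
              ENNReal.ofReal (C / ε ^ (p - 1)) *
                wCost p
                  ((MeasureTheory.Measure.sum
                    (fun k => (μ (Ωs k) / lam (Ωs k)) • lam.restrict (Ωs k))).restrict Ω)
                  (((μ Ω / lam Ω) • lam).restrict Ω) := by
  have hp0 : (0:ℝ) < p := lt_of_lt_of_le one_pos hp
  refine ⟨(4*p) ^ (p-1), by positivity, ?_⟩
  intro d Ω hΩ μ lam _ _ hμc hlamc _ _ hlamΩ Ωs hΩsm hdis hUn hlamΩs ε hε0 hε1
  classical
  set c : ℕ → ℝ≥0∞ := fun k => μ (Ωs k) / lam (Ωs k) with hc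
  set T : Measure (EuclideanSpace ℝ (Fin d)) := ((μ Ω / lam Ω) • lam).restrict Ω with hT
  set M0 : Measure (EuclideanSpace ℝ (Fin d)) :=
    MeasureTheory.Measure.sum (fun k => c k • lam.restrict (Ωs k)) with hM0def
  set S : ℝ≥0∞ := ∑' k, wCost p (μ.restrict (Ωs k)) ((c k • lam).restrict (Ωs k)) with hSdef
  set W2 : ℝ≥0∞ := wCost p (M0.restrict Ω) T with hW2def
  have hco1 : ENNReal.ofReal (1 + ε) ≠ 0 := by
    simp only [ne_eq, ENNReal.ofReal_eq_zero, not_le]; linarith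
  have hco2 : ENNReal.ofReal ((4*p) ^ (p-1) / ε ^ (p-1)) ≠ 0 := by
    simp only [ne_eq, ENNReal.ofReal_eq_zero, not_le]; positivity
  by_cases hSfin : S = ∞
  · rw [hSfin, ENNReal.mul_top hco1, top_add]
    exact le_top
  by_cases hW2fin : W2 = ∞
  · rw [hW2fin, ENNReal.mul_top hco2, add_top]
    exact le_top
  have hΩsub : ∀ k, Ωs k ⊆ Ω := fun k => hUn ▸ Set.subset_iUnion Ωs k
  have hM0r : M0.restrict Ω = M0 := by
    ext s hs
    rw [Measure.restrict_apply hs, hM0def, Measure.sum_apply _ (hs.inter hΩ),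
      Measure.sum_apply _ hs]
    refine tsum_congr fun k => ?_
    rw [Measure.smul_apply, Measure.smul_apply, Measure.restrict_apply (hs.inter hΩ),
      Measure.restrict_apply hs, Set.inter_assoc,
      Set.inter_eq_self_of_subset_right (hΩsub k)]
  have hwkfin : ∀ k, wCost p (μ.restrict (Ωs k)) ((c k • lam).restrict (Ωs k)) ≠ ∞ :=
    fun k => ne_top_of_le_ne_top hSfin (by rw [hSdef]; exact ENNReal.le_tsum k)
  apply ENNReal.le_of_forall_pos_le_add
  intro r hr _
  set D : ℝ≥0∞ := ENNReal.ofReal (1+ε) + ENNReal.ofReal ((4*p) ^ (p-1) / ε ^ (p-1)) with hD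
  have hDt : D ≠ ∞ := by
    rw [hD]; exact ENNReal.add_ne_top.2 ⟨ENNReal.ofReal_ne_top, ENNReal.ofReal_ne_top⟩
  set δ : ℝ≥0∞ := (r : ℝ≥0∞) / D with hδ
  have hδ0 : δ ≠ 0 := (ENNReal.div_pos (by exact_mod_cast hr.ne') hDt).ne'
  have hwklt : ∀ k, wCost p (μ.restrict (Ωs k)) ((c k • lam).restrict (Ωs k)) <
      wCost p (μ.restrict (Ωs k)) ((c k • lam).restrict (Ωs k)) + δ * 2⁻¹ ^ (k+1) :=
    fun k => ENNReal.lt_add_right (hwkfin k)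
      (mul_ne_zero hδ0 (pow_ne_zero _ (by simp)))
  choose πk hπkmem hπkcost using fun k => wCost_lt_iff (hwklt k)
  set π1 : Measure _ := MeasureTheory.Measure.sum πk with hπ1def
  have hπ1fst : π1.map Prod.fst = μ.restrict Ω := by
    rw [hπ1def, Measure.map_sum measurable_fst.aemeasurable]
    have he : (fun k => (πk k).map Prod.fst) = fun k => μ.restrict (Ωs k) :=
      funext fun k => (hπkmem k).1
    rw [he, ← Measure.restrict_iUnion hdis hΩsm, hUn]
  have hπ1snd : π1.map Prod.snd = M0 := by
    rw [hπ1def, Measure.map_sum measurable_snd.aemeasurable, hM0def]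
    congr 1
    funext k
    rw [(hπkmem k).2, Measure.restrict_smul]
  haveI hπ1fin : IsFiniteMeasure π1 := by
    constructor
    have h1 : π1 Set.univ = (π1.map Prod.fst) Set.univ := by
      rw [Measure.map_apply measurable_fst MeasurableSet.univ, Set.preimage_univ]
    rw [h1, hπ1fst]
    exact measure_lt_top _ _
  have hA : ∫⁻ z, edist z.1 z.2 ^ p ∂π1 ≤ S + δ := by
    rw [hπ1def, lintegral_sum_measure]
    calc ∑' k, ∫⁻ z, edist z.1 z.2 ^ p ∂(πk k)
        ≤ ∑' k, (wCost p (μ.restrict (Ωs k)) ((c k • lam).restrict (Ωs k))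
            + δ * 2⁻¹ ^ (k+1)) := ENNReal.tsum_le_tsum fun k => (hπkcost k).le
      _ = S + δ * ∑' k, (2⁻¹ : ℝ≥0∞) ^ (k+1) := by
          rw [ENNReal.tsum_add, ENNReal.tsum_mul_left, hSdef]
      _ = S + δ := by
          rw [ENNReal.tsum_geometric_add_one, ENNReal.one_sub_inv_two, inv_inv,
            ENNReal.inv_mul_cancel (by norm_num) (by norm_num), mul_one]
  have hW2lt : W2 < W2 + δ := ENNReal.lt_add_right hW2fin hδ0
  rw [hW2def] at hW2lt
  obtain ⟨π2, ⟨hπ2fst, hπ2snd⟩, hπ2cost⟩ := wCost_lt_iff hW2lt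
  haveI hπ2fin : IsFiniteMeasure π2 := by
    constructor
    have h1 : π2 Set.univ = (π2.map Prod.fst) Set.univ := by
      rw [Measure.map_apply measurable_fst MeasurableSet.univ, Set.preimage_univ]
    rw [h1, hπ2fst, hM0r, hM0def, Measure.sum_apply _ MeasurableSet.univ]
    have hev : ∀ k, (c k • lam.restrict (Ωs k)) Set.univ = μ (Ωs k) := by
      intro k
      rw [Measure.smul_apply, Measure.restrict_apply MeasurableSet.univ, Set.univ_inter,
        hc, smul_eq_mul]
      exact ENNReal.div_mul_cancel (hlamΩs k).ne' (measure_ne_top lam _)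
    rw [tsum_congr hev, ← measure_iUnion hdis hΩsm]
    exact measure_lt_top μ _
  have hmid : π1.map Prod.snd = π2.map Prod.fst := by rw [hπ1snd, hπ2fst, hM0r]
  obtain ⟨π, hπf, hπs, hπcost⟩ := glue_couplings p hp π1 π2 hmid
  have hwle : wCost p (μ.restrict Ω) T ≤ ∫⁻ z, edist z.1 z.2 ^ p ∂π :=
    wCost_le_coupling (by rw [hπf, hπ1fst]) (by rw [hπs, hπ2snd])
  have hrpow : ∀ x : ℝ≥0∞, (x ^ (1/p)) ^ p = x := by
    intro x
    rw [← ENNReal.rpow_mul, one_div, inv_mul_cancel₀ hp0.ne', ENNReal.rpow_one]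
  have hπcost' : ∫⁻ z, edist z.1 z.2 ^ p ∂π ≤
      ENNReal.ofReal (1+ε) * (∫⁻ z, edist z.1 z.2 ^ p ∂π1)
      + ENNReal.ofReal ((4*p) ^ (p-1) / ε ^ (p-1)) * (∫⁻ z, edist z.1 z.2 ^ p ∂π2) := by
    calc ∫⁻ z, edist z.1 z.2 ^ p ∂π
        = ((∫⁻ z, edist z.1 z.2 ^ p ∂π) ^ (1/p)) ^ p := (hrpow _).symm
      _ ≤ ((∫⁻ z, edist z.1 z.2 ^ p ∂π1) ^ (1/p)
            + (∫⁻ z, edist z.1 z.2 ^ p ∂π2) ^ (1/p)) ^ p :=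
          ENNReal.rpow_le_rpow hπcost hp0.le
      _ ≤ ENNReal.ofReal (1+ε) * (((∫⁻ z, edist z.1 z.2 ^ p ∂π1) ^ (1/p)) ^ p)
          + ENNReal.ofReal ((4*p) ^ (p-1) / ε ^ (p-1))
            * (((∫⁻ z, edist z.1 z.2 ^ p ∂π2) ^ (1/p)) ^ p) :=
          elem_ineq p ε hp hε0 hε1 _ _
      _ = _ := by rw [hrpow, hrpow]
  have hDδ : D * δ ≤ (r : ℝ≥0∞) := by
    rw [hδ]; exact ENNReal.mul_div_le
  calc wCost p (μ.restrict Ω) T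
      ≤ ∫⁻ z, edist z.1 z.2 ^ p ∂π := hwle
    _ ≤ ENNReal.ofReal (1+ε) * (∫⁻ z, edist z.1 z.2 ^ p ∂π1)
        + ENNReal.ofReal ((4*p) ^ (p-1) / ε ^ (p-1)) * (∫⁻ z, edist z.1 z.2 ^ p ∂π2) := hπcost'
    _ ≤ ENNReal.ofReal (1+ε) * (S + δ)
        + ENNReal.ofReal ((4*p) ^ (p-1) / ε ^ (p-1)) * (W2 + δ) :=
        add_le_add (mul_le_mul_right hA _) (mul_le_mul_right hπ2cost.le _)
    _ = (ENNReal.ofReal (1+ε) * S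
        + ENNReal.ofReal ((4*p) ^ (p-1) / ε ^ (p-1)) * W2) + D * δ := by
        rw [hD]; ring
    _ ≤ (ENNReal.ofReal (1+ε) * S
        + ENNReal.ofReal ((4*p) ^ (p-1) / ε ^ (p-1)) * W2) + r :=
        add_le_add_right hDδ _
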